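/- Let E be an evident branch and T a set of terms all of type σ. Then T is compatible (pairwise s ∼ t for all s,t ∈ T) if and only if there exists a value a ∈ D(σ) such that t ≈_σ a for every t ∈ T. -/

import Mathlib

/-- Simple types of STT: the type `o` of truth values is `base 0`, sorts are `base (α+1)`. -/
inductive Ty : Type
  | base : ℕ → Ty
  | arr : Ty → Ty → Ty
  deriving DecidableEq

abbrev Ty.o : Ty := Ty.base 0
abbrev Ty.sort (α : ℕ) : Ty := Ty.base (α + 1)

/-- Terms of STT: variables, negation, primitive equality at every type, application,
lambda abstraction. -/
inductive Tm : Ty → Type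
  | var : ℕ → (σ : Ty) → Tm σ
  | neg : Tm (Ty.arr Ty.o Ty.o)
  | eq : (σ : Ty) → Tm (Ty.arr σ (Ty.arr σ Ty.o))
  | app : ∀ {σ τ : Ty}, Tm (Ty.arr σ τ) → Tm σ → Tm τ
  | lam : ℕ → (σ : Ty) → ∀ {τ : Ty}, Tm τ → Tm (Ty.arr σ τ)

def Tm.Not (s : Tm Ty.o) : Tm Ty.o := Tm.app Tm.neg s
def Tm.Eqn {σ : Ty} (s t : Tm σ) : Tm Ty.o := Tm.app (Tm.app (Tm.eq σ) s) t
def Tm.Diseq {σ : Ty} (s t : Tm σ) : Tm Ty.o := Tm.Not (Tm.Eqn s t)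

/-- Argument lists (spines): `Args σ ρ` turns a head of type `σ` into a term of type `ρ`. -/
inductive Args : Ty → Ty → Type
  | nil : ∀ {ρ}, Args ρ ρ
  | cons : ∀ {σ τ ρ}, Tm σ → Args τ ρ → Args (Ty.arr σ τ) ρ

def applyArgs : ∀ {σ ρ : Ty}, Tm σ → Args σ ρ → Tm ρ
  | _, _, s, Args.nil => s
  | _, _, s, Args.cons t a => applyArgs (Tm.app s t) a

def nfArgs (f : (σ : Ty) → Tm σ → Tm σ) : ∀ {σ ρ : Ty}, Args σ ρ → Args σ ρ
  | _, _, Args.nil => Args.nil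
  | _, _, Args.cons t a => Args.cons (f _ t) (nfArgs f a)

/-- Pairs of equi-typed argument lists `s₁ … sₙ` and `t₁ … tₙ`. -/
inductive Args2 : Ty → Ty → Type
  | nil : ∀ {ρ}, Args2 ρ ρ
  | cons : ∀ {σ τ ρ}, Tm σ → Tm σ → Args2 τ ρ → Args2 (Ty.arr σ τ) ρ

def Args2.left : ∀ {σ ρ}, Args2 σ ρ → Args σ ρ
  | _, _, Args2.nil => Args.nil
  | _, _, Args2.cons s _ p => Args.cons s (Args2.left p)

def Args2.right : ∀ {σ ρ}, Args2 σ ρ → Args σ ρ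
  | _, _, Args2.nil => Args.nil
  | _, _, Args2.cons _ t p => Args.cons t (Args2.right p)

/-- The list of disequations `sᵢ ≠ tᵢ` of a pair of argument lists. -/
def Args2.diseqs : ∀ {σ ρ}, Args2 σ ρ → List (Tm Ty.o)
  | _, _, Args2.nil => []
  | _, _, Args2.cons s t p => Tm.Diseq s t :: Args2.diseqs p

/-- Atomic heads: names (variables and the logical constants). -/
inductive Atomic : ∀ {σ : Ty}, Tm σ → Prop
  | var : ∀ n σ, Atomic (Tm.var n σ)
  | neg : Atomic Tm.neg
  | eq : ∀ σ, Atomic (Tm.eq σ)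

/-- Update a substitution at the name `(x, σ0)`. -/
def updS (θ : ℕ → (σ : Ty) → Option (Tm σ)) (x : ℕ) (σ0 : Ty) (t : Tm σ0) :
    ℕ → (σ : Ty) → Option (Tm σ) := fun n σ =>
  if h : n = x ∧ σ = σ0 then some (h.2.symm ▸ t) else θ n σ

/-- A normalization operator with an accompanying substitution operation,
satisfying N1–N3 and S1–S4. -/
structure NormOp : Type where
  nf : ∀ {σ : Ty}, Tm σ → Tm σ
  sub : (ℕ → (σ : Ty) → Option (Tm σ)) → ∀ {σ : Ty}, Tm σ → Tm σ
  n1 : ∀ {σ : Ty} (s : Tm σ), nf (nf s) = nf s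
  n2 : ∀ {σ τ : Ty} (s : Tm (Ty.arr σ τ)) (t : Tm σ), nf (Tm.app (nf s) t) = nf (Tm.app s t)
  n3 : ∀ {σ : Ty} {β : ℕ} (h : Tm σ), Atomic h → ∀ a : Args σ (Ty.base β),
      nf (applyArgs h a) = applyArgs h (nfArgs (fun _ s => nf s) a)
  s1 : ∀ θ (n : ℕ) (σ : Ty), sub θ (Tm.var n σ) = (θ n σ).getD (Tm.var n σ)
  s1neg : ∀ θ, sub θ Tm.neg = Tm.neg
  s1eq : ∀ θ (σ : Ty), sub θ (Tm.eq σ) = Tm.eq σ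
  s2 : ∀ θ {σ τ : Ty} (s : Tm (Ty.arr σ τ)) (t : Tm σ),
      sub θ (Tm.app s t) = Tm.app (sub θ s) (sub θ t)
  s3 : ∀ θ (x : ℕ) (σ : Ty) {τ : Ty} (s : Tm τ) (t : Tm σ),
      nf (Tm.app (sub θ (Tm.lam x σ s)) t) = nf (sub (updS θ x σ t) s)
  s4 : ∀ {σ : Ty} (s : Tm σ), nf (sub (fun _ _ => none) s) = nf s

/-- The evidence conditions for a branch `E`. -/
structure Evident (Ω : NormOp) (E : Set (Tm Ty.o)) : Prop where
  dn : ∀ s : Tm Ty.o, Tm.Not (Tm.Not s) ∈ E → s ∈ E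
  bq : ∀ s t : Tm Ty.o, Tm.Eqn s t ∈ E → (s ∈ E ∧ t ∈ E) ∨ (Tm.Not s ∈ E ∧ Tm.Not t ∈ E)
  be : ∀ s t : Tm Ty.o, Tm.Diseq s t ∈ E → (s ∈ E ∧ Tm.Not t ∈ E) ∨ (Tm.Not s ∈ E ∧ t ∈ E)
  fq : ∀ {σ τ : Ty} (s t : Tm (Ty.arr σ τ)), Tm.Eqn s t ∈ E → ∀ u : Tm σ, Ω.nf u = u →
      Tm.Eqn (Ω.nf (Tm.app s u)) (Ω.nf (Tm.app t u)) ∈ E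
  fe : ∀ {σ τ : Ty} (s t : Tm (Ty.arr σ τ)), Tm.Diseq s t ∈ E →
      ∃ x : ℕ, Tm.Diseq (Ω.nf (Tm.app s (Tm.var x σ))) (Ω.nf (Tm.app t (Tm.var x σ))) ∈ E
  mat : ∀ {σ : Ty} (x : ℕ) (p : Args2 σ Ty.o),
      applyArgs (Tm.var x σ) p.left ∈ E → Tm.Not (applyArgs (Tm.var x σ) p.right) ∈ E →
      ∃ d ∈ p.diseqs, d ∈ E
  dec : ∀ {σ : Ty} {α : ℕ} (x : ℕ) (p : Args2 σ (Ty.sort α)),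
      Tm.Diseq (applyArgs (Tm.var x σ) p.left) (applyArgs (Tm.var x σ) p.right) ∈ E →
      ∃ d ∈ p.diseqs, d ∈ E
  con : ∀ {α : ℕ} (s t u v : Tm (Ty.sort α)), Tm.Eqn s t ∈ E → Tm.Diseq u v ∈ E →
      (Tm.Diseq s u ∈ E ∧ Tm.Diseq t u ∈ E) ∨ (Tm.Diseq s v ∈ E ∧ Tm.Diseq t v ∈ E)

/-- A term `u` is discriminating in `E` if it occurs on one side of a disequation in `E`. -/
def Discriminating (E : Set (Tm Ty.o)) {σ : Ty} (u : Tm σ) : Prop :=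
  ∃ t : Tm σ, Tm.Diseq u t ∈ E ∨ Tm.Diseq t u ∈ E

/-- An `α`-discriminant: a maximal set of `α`-discriminating terms no two of which are
related by a disequation in `E`. -/
def IsDiscriminant (E : Set (Tm Ty.o)) (α : ℕ) (a : Set (Tm (Ty.sort α))) : Prop :=
  (∀ u ∈ a, Discriminating E u) ∧
  (∀ s ∈ a, ∀ t ∈ a, Tm.Diseq s t ∉ E) ∧
  (∀ b : Set (Tm (Ty.sort α)), a ⊆ b → (∀ u ∈ b, Discriminating E u) →
    (∀ s ∈ b, ∀ t ∈ b, Tm.Diseq s t ∉ E) → b = a)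

/-- `s # t`: the disequation `s ≠ t` or `t ≠ s` belongs to `E`. -/
def hashE (E : Set (Tm Ty.o)) {σ : Ty} (s t : Tm σ) : Prop :=
  Tm.Diseq s t ∈ E ∨ Tm.Diseq t s ∈ E

/-- Compatibility of two terms relative to an evident branch, by induction on types. -/
def compat (Ω : NormOp) (E : Set (Tm Ty.o)) : (σ : Ty) → Tm σ → Tm σ → Prop
  | Ty.base 0 => fun s t =>
      ¬(Ω.nf s ∈ E ∧ Tm.Not (Ω.nf t) ∈ E) ∧ ¬(Tm.Not (Ω.nf s) ∈ E ∧ Ω.nf t ∈ E)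
  | Ty.base (α + 1) => fun s t => ¬ hashE E (Ω.nf s) (Ω.nf t)
  | Ty.arr σ τ => fun s t => ∀ u v : Tm σ, compat Ω E σ u v →
      compat Ω E τ (Tm.app s u) (Tm.app t v)

/-- `ExistsPairHashNf Ω E p` holds if `[sᵢ] # [tᵢ]` for some position `i` of `p`. -/
def ExistsPairHashNf (Ω : NormOp) (E : Set (Tm Ty.o)) : ∀ {σ ρ : Ty}, Args2 σ ρ → Prop
  | _, _, Args2.nil => False
  | _, _, Args2.cons s t p => hashE E (Ω.nf s) (Ω.nf t) ∨ ExistsPairHashNf Ω E p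

/-- The value system of an evident branch `E`: at `o` the values are booleans, at a sort the
values are `α`-discriminants, and at function types the logical-relation clause is used. -/
def sem (Ω : NormOp) (E : Set (Tm Ty.o)) : (σ : Ty) → (A : Type) × (Tm σ → A → Prop)
  | Ty.base 0 => ⟨Bool, fun s b => if b then Tm.Not (Ω.nf s) ∉ E else Ω.nf s ∉ E⟩
  | Ty.base (α + 1) => ⟨Set (Tm (Ty.sort α)), fun s a =>
      IsDiscriminant E α a ∧ (Discriminating E (Ω.nf s) → Ω.nf s ∈ a)⟩
  | Ty.arr σ τ =>
      ⟨{x : (sem Ω E σ).1 // ∃ t : Tm σ, (sem Ω E σ).2 t x} → (sem Ω E τ).1,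
       fun s f => ∀ (t : Tm σ) (x : (sem Ω E σ).1) (h : (sem Ω E σ).2 t x),
         (sem Ω E τ).2 (Tm.app s t) (f ⟨x, t, h⟩)⟩

/-- An applicative structure for STT: nonempty domains, `D(στ)` a set of functions
`D(σ) → D(τ)` (extensionality), `D(o) = {0,1}`, together with an assignment for the
variables and logical values for `¬` and `=_σ`. -/
structure Struc : Type 1 where
  D : Ty → Type
  ap : ∀ {σ τ : Ty}, D (Ty.arr σ τ) → D σ → D τ
  ext : ∀ {σ τ : Ty} (f g : D (Ty.arr σ τ)), (∀ a : D σ, ap f a = ap g a) → f = g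
  ne : ∀ σ : Ty, Nonempty (D σ)
  I : ℕ → ∀ σ : Ty, D σ
  bo : D Ty.o ≃ Bool
  negv : D (Ty.arr Ty.o Ty.o)
  eqv : ∀ σ : Ty, D (Ty.arr σ (Ty.arr σ Ty.o))
  hneg : ∀ b : D Ty.o, ap negv b = bo.symm (!(bo b))
  heq : ∀ {σ : Ty} (a b : D σ), ap (ap (eqv σ) a) b = bo.symm true ↔ a = b

/-- Update the assignment of a structure at the name `(m, σ0)`. -/
def updD (M : Struc) (I : ℕ → ∀ σ, M.D σ) (m : ℕ) (σ0 : Ty) (a : M.D σ0) :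
    ℕ → ∀ σ, M.D σ := fun n σ =>
  if h : n = m ∧ σ = σ0 then (h.2.symm ▸ a) else I n σ

/-- The evaluation relation of a logical structure. -/
inductive Eval (M : Struc) : (ℕ → ∀ σ, M.D σ) → ∀ σ : Ty, Tm σ → M.D σ → Prop
  | var : ∀ (I : ℕ → ∀ σ, M.D σ) (n : ℕ) (σ : Ty), Eval M I σ (Tm.var n σ) (I n σ)
  | neg : ∀ I : ℕ → ∀ σ, M.D σ, Eval M I (Ty.arr Ty.o Ty.o) Tm.neg M.negv
  | eq : ∀ (I : ℕ → ∀ σ, M.D σ) (σ : Ty), Eval M I (Ty.arr σ (Ty.arr σ Ty.o)) (Tm.eq σ) (M.eqv σ)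
  | app : ∀ {I : ℕ → ∀ σ, M.D σ} {σ τ : Ty} {s : Tm (Ty.arr σ τ)} {t : Tm σ}
      {f : M.D (Ty.arr σ τ)} {a : M.D σ},
      Eval M I (Ty.arr σ τ) s f → Eval M I σ t a → Eval M I τ (Tm.app s t) (M.ap f a)
  | lam : ∀ {I : ℕ → ∀ σ, M.D σ} (n : ℕ) (σ : Ty) {τ : Ty} (s : Tm τ) (f : M.D (Ty.arr σ τ)),
      (∀ a : M.D σ, Eval M (updD M I n σ a) τ s (M.ap f a)) →
      Eval M I (Ty.arr σ τ) (Tm.lam n σ s) f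

/-- A logical interpretation: a logical structure whose evaluation is total. -/
structure Interp : Type 1 extends Struc where
  total : ∀ (σ : Ty) (s : Tm σ), ∃ a : toStruc.D σ, Eval toStruc toStruc.I σ s a

/-- `M` is a model of the set of formulas `E`. -/
def Satisfies (M : Interp) (E : Set (Tm Ty.o)) : Prop :=
  ∀ s ∈ E, Eval M.toStruc M.I Ty.o s (M.bo.symm true)

/-- A surjective interpretation: every value is denoted by some term. -/
def Surj (M : Interp) : Prop :=
  ∀ (σ : Ty) (a : M.D σ), ∃ s : Tm σ, Eval M.toStruc M.I σ s a

/-- A complete branch: contains `s` or `¬s` for every normal formula `s`. -/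
def CompleteBranch (Ω : NormOp) (E : Set (Tm Ty.o)) : Prop :=
  ∀ s : Tm Ty.o, Ω.nf s = s → s ∈ E ∨ Tm.Not s ∈ E

/-- The abstract consistency conditions on a set of branches `Γ`. -/
structure ACC (Ω : NormOp) (Γ : Set (Set (Tm Ty.o))) : Prop where
  dn : ∀ A ∈ Γ, ∀ s : Tm Ty.o, Tm.Not (Tm.Not s) ∈ A → insert s A ∈ Γ
  bq : ∀ A ∈ Γ, ∀ s t : Tm Ty.o, Tm.Eqn s t ∈ A →
      insert s (insert t A) ∈ Γ ∨ insert (Tm.Not s) (insert (Tm.Not t) A) ∈ Γ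
  be : ∀ A ∈ Γ, ∀ s t : Tm Ty.o, Tm.Diseq s t ∈ A →
      insert s (insert (Tm.Not t) A) ∈ Γ ∨ insert (Tm.Not s) (insert t A) ∈ Γ
  fq : ∀ A ∈ Γ, ∀ {σ τ : Ty} (s t : Tm (Ty.arr σ τ)), Tm.Eqn s t ∈ A → ∀ u : Tm σ, Ω.nf u = u →
      insert (Tm.Eqn (Ω.nf (Tm.app s u)) (Ω.nf (Tm.app t u))) A ∈ Γ
  fe : ∀ A ∈ Γ, ∀ {σ τ : Ty} (s t : Tm (Ty.arr σ τ)), Tm.Diseq s t ∈ A →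
      ∃ x : ℕ, insert (Tm.Diseq (Ω.nf (Tm.app s (Tm.var x σ))) (Ω.nf (Tm.app t (Tm.var x σ)))) A ∈ Γ
  mat : ∀ A ∈ Γ, ∀ {σ : Ty} (x : ℕ) (p : Args2 σ Ty.o),
      applyArgs (Tm.var x σ) p.left ∈ A → Tm.Not (applyArgs (Tm.var x σ) p.right) ∈ A →
      ∃ d ∈ p.diseqs, insert d A ∈ Γ
  dec : ∀ A ∈ Γ, ∀ {σ : Ty} {α : ℕ} (x : ℕ) (p : Args2 σ (Ty.sort α)),
      Tm.Diseq (applyArgs (Tm.var x σ) p.left) (applyArgs (Tm.var x σ) p.right) ∈ A →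
      ∃ d ∈ p.diseqs, insert d A ∈ Γ
  con : ∀ A ∈ Γ, ∀ {α : ℕ} (s t u v : Tm (Ty.sort α)), Tm.Eqn s t ∈ A → Tm.Diseq u v ∈ A →
      insert (Tm.Diseq s u) (insert (Tm.Diseq t u) A) ∈ Γ ∨
      insert (Tm.Diseq s v) (insert (Tm.Diseq t v) A) ∈ Γ

/-- A complete abstract consistency class. -/
def CompleteACC (Ω : NormOp) (Γ : Set (Set (Tm Ty.o))) : Prop :=
  ∀ A ∈ Γ, ∀ s : Tm Ty.o, Ω.nf s = s → insert s A ∈ Γ ∨ insert (Tm.Not s) A ∈ Γ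

/-- Free occurrence of the name `(x, μ)` in a term. -/
def FreeIn (x : ℕ) (μ : Ty) : ∀ {σ : Ty}, Tm σ → Prop
  | _, Tm.var n σ => x = n ∧ μ = σ
  | _, Tm.app s t => FreeIn x μ s ∨ FreeIn x μ t
  | _, Tm.lam n σ s => ¬(x = n ∧ μ = σ) ∧ FreeIn x μ s
  | _, _ => False

/-- A closed branch: contains `x` and `¬x` for a variable `x : o`, or `x ≠ x` at a sort. -/
def ClosedB (A : Set (Tm Ty.o)) : Prop :=
  (∃ x : ℕ, Tm.var x Ty.o ∈ A ∧ Tm.Not (Tm.var x Ty.o) ∈ A) ∨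
  (∃ (α : ℕ) (x : ℕ), Tm.Diseq (Tm.var x (Ty.sort α)) (Tm.var x (Ty.sort α)) ∈ A)

/-- Refutability in the cut-free tableau calculus `T` for STT, with the restrictions that
rules are applied only to non-closed branches and functional extensionality is applied only
once per disequation. -/
inductive Refutable (Ω : NormOp) : Set (Tm Ty.o) → Prop
  | closed : ∀ {A : Set (Tm Ty.o)}, ClosedB A → Refutable Ω A
  | dn : ∀ {A : Set (Tm Ty.o)} {s : Tm Ty.o}, ¬ClosedB A → Tm.Not (Tm.Not s) ∈ A →
      Refutable Ω (insert s A) → Refutable Ω A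
  | bq : ∀ {A : Set (Tm Ty.o)} (s t : Tm Ty.o), ¬ClosedB A → Tm.Eqn s t ∈ A →
      Refutable Ω (insert s (insert t A)) →
      Refutable Ω (insert (Tm.Not s) (insert (Tm.Not t) A)) → Refutable Ω A
  | be : ∀ {A : Set (Tm Ty.o)} (s t : Tm Ty.o), ¬ClosedB A → Tm.Diseq s t ∈ A →
      Refutable Ω (insert s (insert (Tm.Not t) A)) →
      Refutable Ω (insert (Tm.Not s) (insert t A)) → Refutable Ω A
  | fq : ∀ {A : Set (Tm Ty.o)} {σ τ : Ty} (s t : Tm (Ty.arr σ τ)) (u : Tm σ), ¬ClosedB A →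
      Tm.Eqn s t ∈ A → Ω.nf u = u →
      Refutable Ω (insert (Tm.Eqn (Ω.nf (Tm.app s u)) (Ω.nf (Tm.app t u))) A) → Refutable Ω A
  | fe : ∀ {A : Set (Tm Ty.o)} {σ τ : Ty} (s t : Tm (Ty.arr σ τ)) (x : ℕ), ¬ClosedB A →
      Tm.Diseq s t ∈ A → (∀ u ∈ A, ¬ FreeIn x σ u) →
      (¬∃ y : ℕ, Tm.Diseq (Ω.nf (Tm.app s (Tm.var y σ))) (Ω.nf (Tm.app t (Tm.var y σ))) ∈ A) →
      Refutable Ω (insert (Tm.Diseq (Ω.nf (Tm.app s (Tm.var x σ))) (Ω.nf (Tm.app t (Tm.var x σ)))) A) →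
      Refutable Ω A
  | mat : ∀ {A : Set (Tm Ty.o)} {σ : Ty} (x : ℕ) (p : Args2 σ Ty.o), ¬ClosedB A →
      applyArgs (Tm.var x σ) p.left ∈ A → Tm.Not (applyArgs (Tm.var x σ) p.right) ∈ A →
      (∀ d ∈ p.diseqs, Refutable Ω (insert d A)) → Refutable Ω A
  | dec : ∀ {A : Set (Tm Ty.o)} {σ : Ty} {α : ℕ} (x : ℕ) (p : Args2 σ (Ty.sort α)), ¬ClosedB A →
      Tm.Diseq (applyArgs (Tm.var x σ) p.left) (applyArgs (Tm.var x σ) p.right) ∈ A →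
      (∀ d ∈ p.diseqs, Refutable Ω (insert d A)) → Refutable Ω A
  | con : ∀ {A : Set (Tm Ty.o)} {α : ℕ} (s t u v : Tm (Ty.sort α)), ¬ClosedB A →
      Tm.Eqn s t ∈ A → Tm.Diseq u v ∈ A →
      Refutable Ω (insert (Tm.Diseq s u) (insert (Tm.Diseq t u) A)) →
      Refutable Ω (insert (Tm.Diseq s v) (insert (Tm.Diseq t v) A)) → Refutable Ω A



open Classical

section Basic

variable (Ω : NormOp) (E : Set (Tm Ty.o))

lemma compat_o (s t : Tm Ty.o) : compat Ω E Ty.o s t =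
    (¬(Ω.nf s ∈ E ∧ Tm.Not (Ω.nf t) ∈ E) ∧ ¬(Tm.Not (Ω.nf s) ∈ E ∧ Ω.nf t ∈ E)) := rfl

lemma compat_sort {α : ℕ} (s t : Tm (Ty.sort α)) : compat Ω E (Ty.sort α) s t =
    ¬ hashE E (Ω.nf s) (Ω.nf t) := rfl

lemma compat_arr {σ τ : Ty} (s t : Tm (Ty.arr σ τ)) : compat Ω E (Ty.arr σ τ) s t =
    ∀ u v : Tm σ, compat Ω E σ u v → compat Ω E τ (Tm.app s u) (Tm.app t v) := rfl

lemma sem_o : sem Ω E Ty.o = ⟨Bool, fun s b => if b then Tm.Not (Ω.nf s) ∉ E else Ω.nf s ∉ E⟩ := rfl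

lemma sem_sort (α : ℕ) : sem Ω E (Ty.sort α) = ⟨Set (Tm (Ty.sort α)), fun s a =>
      IsDiscriminant E α a ∧ (Discriminating E (Ω.nf s) → Ω.nf s ∈ a)⟩ := rfl

lemma sem_arr (σ τ : Ty) : sem Ω E (Ty.arr σ τ) =
      ⟨{x : (sem Ω E σ).1 // ∃ t : Tm σ, (sem Ω E σ).2 t x} → (sem Ω E τ).1,
       fun s f => ∀ (t : Tm σ) (x : (sem Ω E σ).1) (h : (sem Ω E σ).2 t x),
         (sem Ω E τ).2 (Tm.app s t) (f ⟨x, t, h⟩)⟩ := rfl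

lemma hashE_symm {σ : Ty} {s t : Tm σ} (h : hashE E s t) : hashE E t s := h.symm

lemma nf_var_base (x β : ℕ) : Ω.nf (Tm.var x (Ty.base β)) = Tm.var x (Ty.base β) :=
  Ω.n3 (Tm.var x (Ty.base β)) (Atomic.var x _) Args.nil

lemma compat_symm : ∀ (σ : Ty) (s t : Tm σ), compat Ω E σ s t → compat Ω E σ t s := by
  intro σ
  induction σ with
  | base n =>
    match n with
    | 0 => intro s t h; exact ⟨fun hc => h.2 ⟨hc.2, hc.1⟩, fun hc => h.1 ⟨hc.2, hc.1⟩⟩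
    | (α+1) => intro s t h; exact fun hh => h hh.symm
  | arr σ τ ihσ ihτ =>
    intro s t h u v huv
    exact ihτ _ _ (h v u (ihσ _ _ huv))

end Basic

/-- size of a type -/
def tsize : Ty → ℕ
  | Ty.base _ => 1
  | Ty.arr a b => tsize a + tsize b + 1

lemma tsize_pos (σ : Ty) : 1 ≤ tsize σ := by
  cases σ <;> simp [tsize]

/-- snoc for argument lists -/
def Args.snoc : ∀ {σ τ ρ : Ty}, Args σ (Ty.arr τ ρ) → Tm τ → Args σ ρ
  | _, _, _, Args.nil, u => Args.cons u Args.nil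
  | _, _, _, Args.cons t a, u => Args.cons t (a.snoc u)

lemma applyArgs_snoc : ∀ {σ τ ρ : Ty} (a : Args σ (Ty.arr τ ρ)) (h : Tm σ) (u : Tm τ),
    applyArgs h (a.snoc u) = Tm.app (applyArgs h a) u
  | _, _, _, Args.nil, h, u => rfl
  | _, _, _, Args.cons t a, h, u => applyArgs_snoc a (Tm.app h t) u

/-- snoc for pairs of argument lists -/
def Args2.snoc : ∀ {σ τ ρ : Ty}, Args2 σ (Ty.arr τ ρ) → Tm τ → Tm τ → Args2 σ ρ
  | _, _, _, Args2.nil, u, v => Args2.cons u v Args2.nil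
  | _, _, _, Args2.cons s t p, u, v => Args2.cons s t (p.snoc u v)

lemma Args2.left_snoc : ∀ {σ τ ρ : Ty} (p : Args2 σ (Ty.arr τ ρ)) (u v : Tm τ),
    (p.snoc u v).left = p.left.snoc u
  | _, _, _, Args2.nil, u, v => rfl
  | _, _, _, Args2.cons s t p, u, v => by
      simp [Args2.snoc, Args2.left, Args.snoc, Args2.left_snoc p]

lemma Args2.right_snoc : ∀ {σ τ ρ : Ty} (p : Args2 σ (Ty.arr τ ρ)) (u v : Tm τ),
    (p.snoc u v).right = p.right.snoc v
  | _, _, _, Args2.nil, u, v => rfl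
  | _, _, _, Args2.cons s t p, u, v => by
      simp [Args2.snoc, Args2.right, Args.snoc, Args2.right_snoc p]

/-- swap for pairs of argument lists -/
def Args2.swap : ∀ {σ ρ : Ty}, Args2 σ ρ → Args2 σ ρ
  | _, _, Args2.nil => Args2.nil
  | _, _, Args2.cons s t p => Args2.cons t s (p.swap)

lemma Args2.left_swap : ∀ {σ ρ : Ty} (p : Args2 σ ρ), p.swap.left = p.right := by
  intro σ ρ p; induction p with
  | nil => rfl
  | cons s t p ih => simp [Args2.swap, Args2.left, Args2.right, ih]

lemma Args2.right_swap : ∀ {σ ρ : Ty} (p : Args2 σ ρ), p.swap.right = p.left := by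
  intro σ ρ p; induction p with
  | nil => rfl
  | cons s t p ih => simp [Args2.swap, Args2.left, Args2.right, ih]

lemma Args2_tsize_le : ∀ {σ ρ : Ty}, Args2 σ ρ → tsize ρ ≤ tsize σ := by
  intro σ ρ p; induction p with
  | nil => exact le_refl _
  | cons s t p ih => simp [tsize] at *; omega

section WithOmega
variable (Ω : NormOp) (E : Set (Tm Ty.o))

/-- all pairs of the spine-pair are compatible and their normal forms are not hash-related -/
def PairsOK : ∀ {σ ρ : Ty}, Args2 σ ρ → Prop
  | _, _, Args2.nil => True
  | _, _, Args2.cons s t p =>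
      (compat Ω E _ s t ∧ ¬ hashE E (Ω.nf s) (Ω.nf t)) ∧ PairsOK p

/-- the pointwise normalization of a spine pair -/
def nfP : ∀ {σ ρ : Ty}, Args2 σ ρ → Args2 σ ρ
  | _, _, Args2.nil => Args2.nil
  | _, _, Args2.cons s t p => Args2.cons (Ω.nf s) (Ω.nf t) (nfP p)

lemma nfP_left : ∀ {σ ρ : Ty} (p : Args2 σ ρ),
    (nfP Ω p).left = nfArgs (fun _ s => Ω.nf s) p.left := by
  intro σ ρ p; induction p with
  | nil => rfl
  | cons s t p ih => simp [nfP, Args2.left, nfArgs, ih]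

lemma nfP_right : ∀ {σ ρ : Ty} (p : Args2 σ ρ),
    (nfP Ω p).right = nfArgs (fun _ s => Ω.nf s) p.right := by
  intro σ ρ p; induction p with
  | nil => rfl
  | cons s t p ih => simp [nfP, Args2.right, nfArgs, ih]

lemma PairsOK_snoc : ∀ {σ τ ρ : Ty} (p : Args2 σ (Ty.arr τ ρ)) (u v : Tm τ),
    PairsOK Ω E p → (compat Ω E τ u v ∧ ¬ hashE E (Ω.nf u) (Ω.nf v)) →
    PairsOK Ω E (p.snoc u v)
  | _, _, _, Args2.nil, u, v, _, h => ⟨h, trivial⟩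
  | _, _, _, Args2.cons s t p, u, v, hp, h => ⟨hp.1, PairsOK_snoc p u v hp.2 h⟩

lemma PairsOK_swap : ∀ {σ ρ : Ty} (p : Args2 σ ρ),
    PairsOK Ω E p → PairsOK Ω E p.swap := by
  intro σ ρ p
  induction p with
  | nil => intro _; trivial
  | cons s t p ih =>
    rintro ⟨⟨h1, h2⟩, hp⟩
    exact ⟨⟨compat_symm Ω E _ _ _ h1, fun hh => h2 hh.symm⟩, ih hp⟩

/-- if the spine pairs are OK, then no disequation of the normalized pair spine is in E -/
lemma PairsOK_no_diseq : ∀ {σ ρ : Ty} (p : Args2 σ ρ),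
    PairsOK Ω E p → ∀ d ∈ (nfP Ω p).diseqs, d ∉ E := by
  intro σ ρ p
  induction p with
  | nil => intro _ d hd; simp [nfP, Args2.diseqs] at hd
  | cons s t p ih =>
    rintro ⟨⟨h1, h2⟩, hp⟩ d hd
    simp only [nfP, Args2.diseqs, List.mem_cons] at hd
    rcases hd with rfl | hd
    · exact fun hdE => h2 (Or.inl hdE)
    · exact ih hp d hd

end WithOmega

section Key
variable {Ω : NormOp} {E : Set (Tm Ty.o)}

/-- Spine lemma: a variable head applied to componentwise OK spines gives compatible terms. -/
theorem varSpineCompat (hE : Evident Ω E) (x : ℕ) (μ : Ty)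
    (hB : ∀ σ' : Ty, tsize σ' < tsize μ →
      ∀ u v : Tm σ', compat Ω E σ' u v → ¬ hashE E (Ω.nf u) (Ω.nf v)) :
    ∀ (τ : Ty) (p : Args2 μ τ), PairsOK Ω E p →
      compat Ω E τ (applyArgs (Tm.var x μ) p.left) (applyArgs (Tm.var x μ) p.right) := by
  intro τ
  induction τ with
  | base m =>
    match m with
    | 0 =>
      intro p hp
      rw [compat_o]
      constructor
      · rintro ⟨h1, h2⟩
        rw [Ω.n3 (Tm.var x μ) (Atomic.var x μ) p.left] at h1
        rw [Ω.n3 (Tm.var x μ) (Atomic.var x μ) p.right] at h2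
        obtain ⟨d, hd, hdE⟩ := hE.mat x (nfP Ω p)
          (by rw [nfP_left]; exact h1) (by rw [nfP_right]; exact h2)
        exact PairsOK_no_diseq Ω E p hp d hd hdE
      · rintro ⟨h1, h2⟩
        rw [Ω.n3 (Tm.var x μ) (Atomic.var x μ) p.left] at h1
        rw [Ω.n3 (Tm.var x μ) (Atomic.var x μ) p.right] at h2
        obtain ⟨d, hd, hdE⟩ := hE.mat x (nfP Ω p.swap)
          (by rw [nfP_left, Args2.left_swap]; exact h2)
          (by rw [nfP_right, Args2.right_swap]; exact h1)
        exact PairsOK_no_diseq Ω E p.swap (PairsOK_swap Ω E p hp) d hd hdE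
    | (α+1) =>
      intro p hp
      rw [compat_sort]
      rintro (h | h)
      · rw [Ω.n3 (Tm.var x μ) (Atomic.var x μ) p.left] at h
        rw [Ω.n3 (Tm.var x μ) (Atomic.var x μ) p.right] at h
        obtain ⟨d, hd, hdE⟩ := hE.dec x (nfP Ω p)
          (by rw [nfP_left, nfP_right]; exact h)
        exact PairsOK_no_diseq Ω E p hp d hd hdE
      · rw [Ω.n3 (Tm.var x μ) (Atomic.var x μ) p.left] at h
        rw [Ω.n3 (Tm.var x μ) (Atomic.var x μ) p.right] at h
        obtain ⟨d, hd, hdE⟩ := hE.dec x (nfP Ω p.swap)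
          (by rw [nfP_left, nfP_right, Args2.left_swap, Args2.right_swap]; exact h)
        exact PairsOK_no_diseq Ω E p.swap (PairsOK_swap Ω E p hp) d hd hdE
  | arr σ' τ' ih1 ih2 =>
    intro p hp
    rw [compat_arr]
    intro u v huv
    have hlt : tsize σ' < tsize μ := by
      have := Args2_tsize_le p
      simp [tsize] at this ⊢
      have h1 := tsize_pos τ'
      omega
    have hok := PairsOK_snoc Ω E p u v hp ⟨huv, hB σ' hlt u v huv⟩
    have := ih2 (p.snoc u v) hok
    rwa [Args2.left_snoc, Args2.right_snoc, applyArgs_snoc, applyArgs_snoc] at this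

/-- Lemma B: compatible terms have non-hash-related normal forms, and
Lemma A: variables are self-compatible (proved by strong induction on type size). -/
theorem compat_not_hash_aux (hE : Evident Ω E) :
    ∀ (n : ℕ) (σ : Ty), tsize σ ≤ n →
      ∀ s t : Tm σ, compat Ω E σ s t → ¬ hashE E (Ω.nf s) (Ω.nf t) := by
  intro n
  induction n with
  | zero => intro σ h; have := tsize_pos σ; omega
  | succ n ih =>
    intro σ hσ s t
    match σ, hσ with
    | Ty.base 0, hσ =>
      rw [compat_o]
      rintro ⟨h1, h2⟩ (h | h)
      · rcases hE.be _ _ h with ⟨ha, hb⟩ | ⟨ha, hb⟩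
        · exact h1 ⟨ha, hb⟩
        · exact h2 ⟨ha, hb⟩
      · rcases hE.be _ _ h with ⟨ha, hb⟩ | ⟨ha, hb⟩
        · exact h2 ⟨hb, ha⟩
        · exact h1 ⟨hb, ha⟩
    | Ty.base (α+1), hσ =>
      rw [compat_sort]; exact fun h => h
    | Ty.arr σ₁ τ, hσ =>
      intro hst hh
      simp only [tsize] at hσ
      have h1 := tsize_pos σ₁
      have h2 := tsize_pos τ
      have hB : ∀ σ' : Ty, tsize σ' < tsize σ₁ →
          ∀ u v : Tm σ', compat Ω E σ' u v → ¬ hashE E (Ω.nf u) (Ω.nf v) := by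
        intro σ' hlt
        exact ih σ' (by omega)
      rcases hh with h | h
      · obtain ⟨x, hx⟩ := hE.fe (Ω.nf s) (Ω.nf t) h
        rw [Ω.n2 s (Tm.var x σ₁), Ω.n2 t (Tm.var x σ₁)] at hx
        have hvar : compat Ω E σ₁ (Tm.var x σ₁) (Tm.var x σ₁) :=
          varSpineCompat hE x σ₁ hB σ₁ Args2.nil trivial
        have hc : compat Ω E τ (Tm.app s (Tm.var x σ₁)) (Tm.app t (Tm.var x σ₁)) :=
          hst _ _ hvar
        exact ih τ (by omega) _ _ hc (Or.inl hx)
      · obtain ⟨x, hx⟩ := hE.fe (Ω.nf t) (Ω.nf s) h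
        rw [Ω.n2 s (Tm.var x σ₁), Ω.n2 t (Tm.var x σ₁)] at hx
        have hvar : compat Ω E σ₁ (Tm.var x σ₁) (Tm.var x σ₁) :=
          varSpineCompat hE x σ₁ hB σ₁ Args2.nil trivial
        have hc : compat Ω E τ (Tm.app t (Tm.var x σ₁)) (Tm.app s (Tm.var x σ₁)) :=
          compat_symm Ω E _ _ _ hst _ _ hvar
        exact ih τ (by omega) _ _ hc (Or.inl hx)

theorem compat_not_hash (hE : Evident Ω E) {σ : Ty} {s t : Tm σ}
    (h : compat Ω E σ s t) : ¬ hashE E (Ω.nf s) (Ω.nf t) :=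
  compat_not_hash_aux hE (tsize σ) σ le_rfl s t h

theorem var_self_compat (hE : Evident Ω E) (x : ℕ) (σ : Ty) :
    compat Ω E σ (Tm.var x σ) (Tm.var x σ) :=
  varSpineCompat hE x σ (fun σ' _ u v h => compat_not_hash hE h) σ Args2.nil trivial

end Key

section Fund
variable {Ω : NormOp} {E : Set (Tm Ty.o)}

lemma nf_Not (a : Tm Ty.o) : Ω.nf (Tm.app Tm.neg a) = Tm.app Tm.neg (Ω.nf a) :=
  Ω.n3 Tm.neg Atomic.neg (Args.cons a Args.nil)

lemma nf_Eqn {σ : Ty} (a c : Tm σ) : Ω.nf (Tm.Eqn a c) = Tm.Eqn (Ω.nf a) (Ω.nf c) :=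
  Ω.n3 (Tm.eq σ) (Atomic.eq σ) (Args.cons a (Args.cons c Args.nil))

/-- compatibility only depends on the normal forms -/
lemma compat_congr_nf : ∀ (σ : Ty) {s s' t t' : Tm σ},
    Ω.nf s = Ω.nf s' → Ω.nf t = Ω.nf t' → compat Ω E σ s t → compat Ω E σ s' t' := by
  intro σ
  induction σ with
  | base m =>
    match m with
    | 0 => intro s s' t t' hs ht h; rw [compat_o] at h ⊢; rw [← hs, ← ht]; exact h
    | (α+1) => intro s s' t t' hs ht h; rw [compat_sort] at h ⊢; rw [← hs, ← ht]; exact h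
  | arr σ τ ihσ ihτ =>
    intro s s' t t' hs ht h u v huv
    have h1 : Ω.nf (Tm.app s u) = Ω.nf (Tm.app s' u) := by
      rw [← Ω.n2 s u, ← Ω.n2 s' u, hs]
    have h2 : Ω.nf (Tm.app t v) = Ω.nf (Tm.app t' v) := by
      rw [← Ω.n2 t v, ← Ω.n2 t' v, ht]
    exact ihτ h1 h2 (h u v huv)

lemma neg_self_compat (hE : Evident Ω E) :
    compat Ω E (Ty.arr Ty.o Ty.o) Tm.neg Tm.neg := by
  intro a b hab
  rw [compat_o] at hab ⊢
  constructor
  · rintro ⟨h1, h2⟩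
    rw [nf_Not] at h1
    rw [nf_Not] at h2
    exact hab.2 ⟨h1, hE.dn _ h2⟩
  · rintro ⟨h1, h2⟩
    rw [nf_Not] at h1
    rw [nf_Not] at h2
    exact hab.1 ⟨hE.dn _ h1, h2⟩

/-- The equality congruence property, by induction on the type. -/
lemma eqCompatAux (hE : Evident Ω E) : ∀ (σ : Ty) (a b c d : Tm σ),
    compat Ω E σ a b → compat Ω E σ c d →
    (¬(Tm.Eqn (Ω.nf a) (Ω.nf c) ∈ E ∧ Tm.Diseq (Ω.nf b) (Ω.nf d) ∈ E) ∧
     ¬(Tm.Diseq (Ω.nf a) (Ω.nf c) ∈ E ∧ Tm.Eqn (Ω.nf b) (Ω.nf d) ∈ E)) := by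
  intro σ
  induction σ with
  | base m =>
    match m with
    | 0 =>
      intro a b c d hab hcd
      rw [compat_o] at hab hcd
      constructor
      · rintro ⟨hEq, hDis⟩
        rcases hE.bq _ _ hEq with ⟨ha, hc⟩ | ⟨ha, hc⟩ <;>
          rcases hE.be _ _ hDis with ⟨hb, hd⟩ | ⟨hb, hd⟩
        · exact hcd.1 ⟨hc, hd⟩
        · exact hab.1 ⟨ha, hb⟩
        · exact hab.2 ⟨ha, hb⟩
        · exact hcd.2 ⟨hc, hd⟩
      · rintro ⟨hDis, hEq⟩
        rcases hE.be _ _ hDis with ⟨ha, hc⟩ | ⟨ha, hc⟩ <;>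
          rcases hE.bq _ _ hEq with ⟨hb, hd⟩ | ⟨hb, hd⟩
        · exact hcd.2 ⟨hc, hd⟩
        · exact hab.1 ⟨ha, hb⟩
        · exact hab.2 ⟨ha, hb⟩
        · exact hcd.1 ⟨hc, hd⟩
    | (α+1) =>
      intro a b c d hab hcd
      constructor
      · rintro ⟨hEq, hDis⟩
        rcases hE.con _ _ _ _ hEq hDis with ⟨h1, h2⟩ | ⟨h1, h2⟩
        · exact compat_not_hash hE hab (Or.inl h1)
        · exact compat_not_hash hE hcd (Or.inl h2)
      · rintro ⟨hDis, hEq⟩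
        rcases hE.con _ _ _ _ hEq hDis with ⟨h1, h2⟩ | ⟨h1, h2⟩
        · exact compat_not_hash hE hab (Or.inr h1)
        · exact compat_not_hash hE hcd (Or.inr h2)
  | arr σ' ρ ihσ ihρ =>
    intro a b c d hab hcd
    constructor
    · rintro ⟨hEq, hDis⟩
      obtain ⟨x, hx⟩ := hE.fe _ _ hDis
      rw [Ω.n2 b (Tm.var x σ'), Ω.n2 d (Tm.var x σ')] at hx
      have hw : Ω.nf (Ω.nf (Tm.var x σ')) = Ω.nf (Tm.var x σ') := Ω.n1 _
      have hfq := hE.fq _ _ hEq (Ω.nf (Tm.var x σ')) hw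
      rw [Ω.n2 a _, Ω.n2 c _] at hfq
      have hvx : compat Ω E σ' (Ω.nf (Tm.var x σ')) (Tm.var x σ') :=
        compat_congr_nf σ' hw.symm rfl (var_self_compat hE x σ')
      have h1 : compat Ω E ρ (Tm.app a (Ω.nf (Tm.var x σ'))) (Tm.app b (Tm.var x σ')) :=
        hab _ _ hvx
      have h2 : compat Ω E ρ (Tm.app c (Ω.nf (Tm.var x σ'))) (Tm.app d (Tm.var x σ')) :=
        hcd _ _ hvx
      exact (ihρ _ _ _ _ h1 h2).1 ⟨hfq, hx⟩
    · rintro ⟨hDis, hEq⟩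
      obtain ⟨x, hx⟩ := hE.fe _ _ hDis
      rw [Ω.n2 a (Tm.var x σ'), Ω.n2 c (Tm.var x σ')] at hx
      have hw : Ω.nf (Ω.nf (Tm.var x σ')) = Ω.nf (Tm.var x σ') := Ω.n1 _
      have hfq := hE.fq _ _ hEq (Ω.nf (Tm.var x σ')) hw
      rw [Ω.n2 b _, Ω.n2 d _] at hfq
      have hvx : compat Ω E σ' (Tm.var x σ') (Ω.nf (Tm.var x σ')) :=
        compat_congr_nf σ' rfl hw.symm (var_self_compat hE x σ')
      have h1 : compat Ω E ρ (Tm.app a (Tm.var x σ')) (Tm.app b (Ω.nf (Tm.var x σ'))) :=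
        hab _ _ hvx
      have h2 : compat Ω E ρ (Tm.app c (Tm.var x σ')) (Tm.app d (Ω.nf (Tm.var x σ'))) :=
        hcd _ _ hvx
      exact (ihρ _ _ _ _ h1 h2).2 ⟨hx, hfq⟩

lemma eq_self_compat (hE : Evident Ω E) (σ : Ty) :
    compat Ω E (Ty.arr σ (Ty.arr σ Ty.o)) (Tm.eq σ) (Tm.eq σ) := by
  intro a b hab c d hcd
  rw [compat_o]
  have key := eqCompatAux hE σ a b c d hab hcd
  constructor
  · rintro ⟨h1, h2⟩
    rw [show Tm.app (Tm.app (Tm.eq σ) a) c = Tm.Eqn a c from rfl, nf_Eqn] at h1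
    rw [show Tm.app (Tm.app (Tm.eq σ) b) d = Tm.Eqn b d from rfl, nf_Eqn] at h2
    exact key.1 ⟨h1, h2⟩
  · rintro ⟨h1, h2⟩
    rw [show Tm.app (Tm.app (Tm.eq σ) a) c = Tm.Eqn a c from rfl, nf_Eqn] at h1
    rw [show Tm.app (Tm.app (Tm.eq σ) b) d = Tm.Eqn b d from rfl, nf_Eqn] at h2
    exact key.2 ⟨h1, h2⟩

end Fund

section Refl
variable {Ω : NormOp} {E : Set (Tm Ty.o)}

/-- pointwise compatibility of two substitutions -/
def ThetaCompat (Ω : NormOp) (E : Set (Tm Ty.o))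
    (θ θ' : ℕ → (σ : Ty) → Option (Tm σ)) : Prop :=
  ∀ (k : ℕ) (σ : Ty), (θ k σ = none ∧ θ' k σ = none) ∨
    (∃ u v : Tm σ, θ k σ = some u ∧ θ' k σ = some v ∧ compat Ω E σ u v)

lemma ThetaCompat.upd {θ θ' : ℕ → (σ : Ty) → Option (Tm σ)}
    (h : ThetaCompat Ω E θ θ') (x : ℕ) (σ : Ty) {r r' : Tm σ}
    (hrr' : compat Ω E σ r r') :
    ThetaCompat Ω E (updS θ x σ r) (updS θ' x σ r') := by
  intro k σ'
  unfold updS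
  by_cases hk : k = x ∧ σ' = σ
  · obtain ⟨hk1, hk2⟩ := hk
    subst hk2
    subst hk1
    right
    exact ⟨r, r', by simp, by simp, hrr'⟩
  · simp only [dif_neg hk]
    exact h k σ'

/-- Fundamental lemma: substitution instances of a term under pointwise
compatible substitutions are compatible. -/
theorem subCompat (hE : Evident Ω E) : ∀ {τ : Ty} (b : Tm τ)
    (θ θ' : ℕ → (σ : Ty) → Option (Tm σ)), ThetaCompat Ω E θ θ' →
    compat Ω E τ (Ω.sub θ b) (Ω.sub θ' b) := by
  intro τ b
  induction b with
  | var n σ =>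
    intro θ θ' hθ
    rw [Ω.s1, Ω.s1]
    rcases hθ n σ with ⟨h1, h2⟩ | ⟨u, v, h1, h2, huv⟩
    · rw [h1, h2]; exact var_self_compat hE n σ
    · rw [h1, h2]; exact huv
  | neg =>
    intro θ θ' hθ
    rw [Ω.s1neg, Ω.s1neg]
    exact neg_self_compat hE
  | eq σ =>
    intro θ θ' hθ
    rw [Ω.s1eq, Ω.s1eq]
    exact eq_self_compat hE σ
  | app f a ihf iha =>
    intro θ θ' hθ
    rw [Ω.s2, Ω.s2]
    exact ihf θ θ' hθ _ _ (iha θ θ' hθ)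
  | lam x σ body ihbody =>
    intro θ θ' hθ
    intro r r' hrr'
    have hsub := ihbody (updS θ x σ r) (updS θ' x σ r') (hθ.upd x σ hrr')
    exact compat_congr_nf _ (Ω.s3 θ x σ body r).symm (Ω.s3 θ' x σ body r').symm hsub

/-- Compatibility is reflexive. -/
theorem compat_refl (hE : Evident Ω E) {σ : Ty} (u : Tm σ) : compat Ω E σ u u := by
  have h := subCompat hE u (fun _ _ => none) (fun _ _ => none) (fun k σ' => Or.inl ⟨rfl, rfl⟩)
  exact compat_congr_nf σ (Ω.s4 u) (Ω.s4 u) h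

end Refl

section Main
variable {Ω : NormOp} {E : Set (Tm Ty.o)}

lemma sem_o_true' (s : Tm Ty.o) : (sem Ω E Ty.o).2 s true ↔ Tm.Not (Ω.nf s) ∉ E := by
  simp [sem]

lemma sem_o_false' (s : Tm Ty.o) : (sem Ω E Ty.o).2 s false ↔ Ω.nf s ∉ E := by
  simp [sem]

/-- The main induction: forward direction (for nonempty sets) and backward direction. -/
theorem mainInd (hE : Evident Ω E) : ∀ σ : Ty,
    (∀ T : Set (Tm σ), T.Nonempty → (∀ s ∈ T, ∀ t ∈ T, compat Ω E σ s t) →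
      ∃ a : (sem Ω E σ).1, (∃ u : Tm σ, (sem Ω E σ).2 u a) ∧ ∀ t ∈ T, (sem Ω E σ).2 t a) ∧
    (∀ (a : (sem Ω E σ).1) (s t : Tm σ),
      (sem Ω E σ).2 s a → (sem Ω E σ).2 t a → compat Ω E σ s t) := by
  intro σ
  induction σ with
  | base m =>
    match m with
    | 0 =>
      constructor
      · rintro T ⟨t₀, ht₀⟩ hpw
        by_cases hpos : ∃ t₁ ∈ T, Ω.nf t₁ ∈ E
        · obtain ⟨t₁, ht₁, hmem⟩ := hpos
          have key : ∀ t ∈ T, Tm.Not (Ω.nf t) ∉ E := by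
            intro t ht hc
            exact (hpw t₁ ht₁ t ht).1 ⟨hmem, hc⟩
          exact ⟨true, ⟨t₁, (sem_o_true' t₁).2 (key t₁ ht₁)⟩,
            fun t ht => (sem_o_true' t).2 (key t ht)⟩
        · push_neg at hpos
          exact ⟨false, ⟨t₀, (sem_o_false' t₀).2 (hpos t₀ ht₀)⟩,
            fun t ht => (sem_o_false' t).2 (hpos t ht)⟩
      · intro a s t hs ht
        rw [compat_o]
        cases a
        · rw [sem_o_false'] at hs ht
          exact ⟨fun hc => hs hc.1, fun hc => ht hc.2⟩
        · rw [sem_o_true'] at hs ht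
          exact ⟨fun hc => ht hc.2, fun hc => hs hc.1⟩
    | (α+1) =>
      constructor
      · rintro T ⟨t₀, ht₀⟩ hpw
        set S : Set (Tm (Ty.sort α)) :=
          {w | (∃ t ∈ T, Ω.nf t = w) ∧ Discriminating E w} with hS
        set F : Set (Set (Tm (Ty.sort α))) :=
          {b | (∀ u ∈ b, Discriminating E u) ∧ ∀ s ∈ b, ∀ t ∈ b, Tm.Diseq s t ∉ E} with hF
        have hSF : S ∈ F := by
          constructor
          · rintro u ⟨_, hd⟩; exact hd
          · rintro s ⟨⟨s', hs', rfl⟩, _⟩ t ⟨⟨t', ht', rfl⟩, _⟩ hd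
            exact compat_not_hash hE (hpw s' hs' t' ht') (Or.inl hd)
        have hchain : ∀ c ⊆ F, IsChain (· ⊆ ·) c → c.Nonempty →
            ∃ ub ∈ F, ∀ s ∈ c, s ⊆ ub := by
          intro c hcF hchain hcne
          refine ⟨⋃₀ c, ⟨?_, ?_⟩, fun s hs => Set.subset_sUnion_of_mem hs⟩
          · rintro u ⟨b, hb, hub⟩
            exact (hcF hb).1 u hub
          · rintro s ⟨b1, hb1, hsb1⟩ t ⟨b2, hb2, htb2⟩
            rcases hchain.total hb1 hb2 with h | h
            · exact (hcF hb2).2 s (h hsb1) t htb2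
            · exact (hcF hb1).2 s hsb1 t (h htb2)
        obtain ⟨M, hSM, hmax⟩ := zorn_subset_nonempty F hchain S hSF
        have hdisc : IsDiscriminant E α M := by
          refine ⟨hmax.1.1, hmax.1.2, ?_⟩
          intro b hMb hb1 hb2
          exact Set.Subset.antisymm (hmax.2 ⟨hb1, hb2⟩ hMb) hMb
        have hmem : ∀ t ∈ T, (sem Ω E (Ty.sort α)).2 t M := by
          intro t ht
          exact ⟨hdisc, fun hd => hSM ⟨⟨t, ht, rfl⟩, hd⟩⟩
        exact ⟨M, ⟨t₀, hmem t₀ ht₀⟩, hmem⟩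
      · intro a s t hs ht
        rw [compat_sort]
        rintro (h | h)
        · exact hs.1.2.1 _ (hs.2 ⟨Ω.nf t, Or.inl h⟩) _ (ht.2 ⟨Ω.nf s, Or.inr h⟩) h
        · exact hs.1.2.1 _ (ht.2 ⟨Ω.nf s, Or.inl h⟩) _ (hs.2 ⟨Ω.nf t, Or.inr h⟩) h
  | arr σ τ ihσ ihτ =>
    have Gσ : ∀ u v : Tm σ, compat Ω E σ u v →
        ∃ x : (sem Ω E σ).1, (sem Ω E σ).2 u x ∧ (sem Ω E σ).2 v x := by
      intro u v huv
      have hpw : ∀ s ∈ ({u, v} : Set (Tm σ)), ∀ t ∈ ({u, v} : Set (Tm σ)),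
          compat Ω E σ s t := by
        intro s hs t ht
        simp only [Set.mem_insert_iff, Set.mem_singleton_iff] at hs ht
        rcases hs with rfl | rfl <;> rcases ht with rfl | rfl
        · exact compat_refl hE _
        · exact huv
        · exact compat_symm Ω E σ _ _ huv
        · exact compat_refl hE _
      obtain ⟨a, _, hall⟩ := ihσ.1 {u, v} ⟨u, Set.mem_insert _ _⟩ hpw
      exact ⟨a, hall u (Set.mem_insert _ _),
        hall v (Set.mem_insert_iff.mpr (Or.inr rfl))⟩
    constructor
    · rintro T ⟨t₀, ht₀⟩ hpw
      -- for each witnessed value x, the set of applications of members of T to terms of value x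
      have spec : ∀ xel : {x : (sem Ω E σ).1 // ∃ w : Tm σ, (sem Ω E σ).2 w x},
          ∃ a : (sem Ω E τ).1, (∃ u : Tm τ, (sem Ω E τ).2 u a) ∧
            ∀ z ∈ {z : Tm τ | ∃ s ∈ T, ∃ w : Tm σ, (sem Ω E σ).2 w xel.1 ∧ z = Tm.app s w},
              (sem Ω E τ).2 z a := by
        rintro ⟨x, w₀, hw₀⟩
        apply ihτ.1
        · exact ⟨Tm.app t₀ w₀, t₀, ht₀, w₀, hw₀, rfl⟩
        · rintro z ⟨s, hs, w, hw, rfl⟩ z' ⟨s', hs', w', hw', rfl⟩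
          exact hpw s hs s' hs' w w' (ihσ.2 x w w' hw hw')
      set F : {x : (sem Ω E σ).1 // ∃ w : Tm σ, (sem Ω E σ).2 w x} → (sem Ω E τ).1 :=
        fun xel => (spec xel).choose with hFdef
      have hF : ∀ xel, ∀ z ∈ {z : Tm τ | ∃ s ∈ T, ∃ w : Tm σ,
          (sem Ω E σ).2 w xel.1 ∧ z = Tm.app s w}, (sem Ω E τ).2 z (F xel) :=
        fun xel => (spec xel).choose_spec.2
      have hmem : ∀ t ∈ T, (sem Ω E (Ty.arr σ τ)).2 t F := by
        intro t ht
        intro w x hw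
        exact hF ⟨x, w, hw⟩ (Tm.app t w) ⟨t, ht, w, hw, rfl⟩
      exact ⟨F, ⟨t₀, hmem t₀ ht₀⟩, hmem⟩
    · intro f s t hs ht u v huv
      obtain ⟨x, hux, hvx⟩ := Gσ u v huv
      have h1 := hs u x hux
      have h2 := ht v x hvx
      have heq : (⟨x, u, hux⟩ : {x : (sem Ω E σ).1 // ∃ w : Tm σ, (sem Ω E σ).2 w x})
          = ⟨x, v, hvx⟩ := Subtype.ext rfl
      rw [heq] at h1
      exact ihτ.2 (f ⟨x, v, hvx⟩) _ _ h1 h2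

end Main

/-- Common Value Lemma: a set `T` of terms of type `σ` is compatible iff there
is a value `a ∈ D(σ)` with `t ≈_σ a` for all `t ∈ T`. -/
theorem stmt8 (Ω : NormOp) (E : Set (Tm Ty.o)) (hE : Evident Ω E)
    (hnorm : ∀ s ∈ E, Ω.nf s = s) (σ : Ty) (T : Set (Tm σ)) :
    (∀ s ∈ T, ∀ t ∈ T, compat Ω E σ s t) ↔
    ∃ a : (sem Ω E σ).1, (∃ u : Tm σ, (sem Ω E σ).2 u a) ∧ ∀ t ∈ T, (sem Ω E σ).2 t a := by
  constructor
  · intro h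
    rcases Set.eq_empty_or_nonempty T with rfl | hne
    · obtain ⟨a, hu, _⟩ := (mainInd hE σ).1 {Tm.var 0 σ} ⟨_, rfl⟩
        (by
          intro s hs t ht
          simp only [Set.mem_singleton_iff] at hs ht
          subst hs; subst ht
          exact compat_refl hE _)
      exact ⟨a, hu, fun t ht => absurd ht (Set.notMem_empty t)⟩
    · exact (mainInd hE σ).1 T hne h
  · rintro ⟨a, ⟨u₀, hu₀⟩, hall⟩ s hs t ht
    exact (mainInd hE σ).2 a s t (hall s hs) (hall t ht)
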